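/- Let s ≥ 1 and suppose G acts faithfully and transitively on a finite set X. Then the translation subgroup T = ⟨g, h⟩ does not act transitively on X. -/

import Mathlib

set_option maxHeartbeats 1000000

theorem Word_E6 {G : Type*} [Group G] (p q r : G)
    (hp2 : ∀ x : G, p * (p * x) = x) (hq2 : ∀ x : G, q * (q * x) = x)
    (hr2 : ∀ x : G, r * (r * x) = x)
    (hbpq : ∀ x : G, p * (q * (p * x)) = q * (p * (q * x)))
    (hbpr : ∀ x : G, p * (r * x) = r * (p * x))
    (hbqr : ∀ x : G, q * (r * (q * (r * (q * (r * x))))) = r * (q * (r * (q * (r * (q * x)))))) :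
    p * (q * (r * (q * (r * (q * (q * (p * (q * (r * (q * (r * ((1 : G))))))))))))) = q * (p * (q * (r * (q * (r * (p * (q * (r * (q * (r * (q * ((1 : G))))))))))))) := by
  conv_lhs =>
    rw [hq2 (p * (q * (r * (q * (r * ((1 : G)))))))]
    rw [← hq2 ((1 : G))]
    rw [← hbpr (q * (r * (q * (r * (q * (q * ((1 : G))))))))]
    rw [← hbqr (q * ((1 : G)))]
    rw [← hbpq (r * (q * (r * (q * (r * (q * ((1 : G))))))))]
    rw [← hbpr (q * (p * (r * (q * (r * (q * (r * (q * ((1 : G))))))))))]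
    rw [hbpq (r * (q * (p * (r * (q * (r * (q * (r * (q * ((1 : G)))))))))))]
    rw [hbpr (q * (r * (q * (r * (q * ((1 : G)))))))]

theorem Word_E7 {G : Type*} [Group G] (p q r : G)
    (hp2 : ∀ x : G, p * (p * x) = x) (hq2 : ∀ x : G, q * (q * x) = x)
    (hr2 : ∀ x : G, r * (r * x) = x)
    (hbpq : ∀ x : G, p * (q * (p * x)) = q * (p * (q * x)))
    (hbpr : ∀ x : G, p * (r * x) = r * (p * x))
    (hbqr : ∀ x : G, q * (r * (q * (r * (q * (r * x))))) = r * (q * (r * (q * (r * (q * x)))))) :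
    r * (q * (p * (q * (r * (q * (r * (r * ((1 : G))))))))) = p * (q * (r * (q * (r * (q * (r * (q * (r * (q * (p * (q * ((1 : G))))))))))))) := by
  conv_lhs =>
    rw [← hbpq (r * (q * (r * (r * ((1 : G))))))]
    rw [hbpr (q * (r * (r * ((1 : G)))))]
    rw [← hq2 (p * (q * (r * (r * ((1 : G))))))]
    rw [← hbpr (q * (r * (q * (q * (p * (q * (r * (r * ((1 : G))))))))))]
    rw [← hr2 (q * (p * (q * (r * (r * ((1 : G)))))))]
    rw [← hq2 (r * (q * (p * (q * (r * (r * ((1 : G))))))))]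
    rw [← hbqr (q * (r * (q * (p * (q * (r * (r * ((1 : G)))))))))]
    rw [hr2 ((1 : G))]

theorem Word_Epb {G : Type*} [Group G] (p q r : G)
    (hp2 : ∀ x : G, p * (p * x) = x) (hq2 : ∀ x : G, q * (q * x) = x)
    (hr2 : ∀ x : G, r * (r * x) = x)
    (hbpq : ∀ x : G, p * (q * (p * x)) = q * (p * (q * x)))
    (hbpr : ∀ x : G, p * (r * x) = r * (p * x))
    (hbqr : ∀ x : G, q * (r * (q * (r * (q * (r * x))))) = r * (q * (r * (q * (r * (q * x)))))) :
    p * (q * (p * (q * (r * (q * (r * (p * ((1 : G))))))))) = q * (r * (q * (r * (q * (p * (q * (p * (q * (r * (q * (r * ((1 : G))))))))))))) := by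
  conv_lhs =>
    rw [← hbpr ((1 : G))]
    rw [← hbpq (r * (q * (p * (r * ((1 : G))))))]
    rw [hbpr (q * (p * (r * ((1 : G)))))]
    rw [hbpq (r * ((1 : G)))]
    rw [← hr2 (p * (q * (r * ((1 : G)))))]
    rw [← hbpr (q * (r * ((1 : G))))]
    rw [← hq2 (r * (q * (r * ((1 : G)))))]
    rw [← hq2 (p * (q * (q * (r * (q * (r * ((1 : G))))))))]
    rw [← hbpq (q * (r * (q * (r * ((1 : G))))))]
    rw [hp2 (q * (r * (q * (r * (q * (p * (q * (p * (q * (r * (q * (r * ((1 : G))))))))))))))]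

theorem Word_Einva {G : Type*} [Group G] (p q r : G)
    (hp2 : ∀ x : G, p * (p * x) = x) (hq2 : ∀ x : G, q * (q * x) = x)
    (hr2 : ∀ x : G, r * (r * x) = x)
    (hbpq : ∀ x : G, p * (q * (p * x)) = q * (p * (q * x)))
    (hbpr : ∀ x : G, p * (r * x) = r * (p * x))
    (hbqr : ∀ x : G, q * (r * (q * (r * (q * (r * x))))) = r * (q * (r * (q * (r * (q * x)))))) :
    p * (q * (r * (q * (r * (q * (q * (r * (q * (r * (q * (p * ((1 : G))))))))))))) = (1 : G) := by
  conv_lhs =>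
    rw [hq2 (r * (q * (r * (q * (p * ((1 : G)))))))]
    rw [hr2 (q * (r * (q * (p * ((1 : G))))))]
    rw [hq2 (r * (q * (p * ((1 : G)))))]
    rw [hr2 (q * (p * ((1 : G))))]
    rw [hq2 (p * ((1 : G)))]
    rw [hp2 ((1 : G))]

theorem Word_Einvb {G : Type*} [Group G] (p q r : G)
    (hp2 : ∀ x : G, p * (p * x) = x) (hq2 : ∀ x : G, q * (q * x) = x)
    (hr2 : ∀ x : G, r * (r * x) = x)
    (hbpq : ∀ x : G, p * (q * (p * x)) = q * (p * (q * x)))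
    (hbpr : ∀ x : G, p * (r * x) = r * (p * x))
    (hbqr : ∀ x : G, q * (r * (q * (r * (q * (r * x))))) = r * (q * (r * (q * (r * (q * x)))))) :
    q * (p * (q * (r * (q * (r * (r * (q * (r * (q * (p * (q * ((1 : G))))))))))))) = (1 : G) := by
  conv_lhs =>
    rw [hr2 (q * (r * (q * (p * (q * ((1 : G)))))))]
    rw [hq2 (r * (q * (p * (q * ((1 : G))))))]
    rw [hr2 (q * (p * (q * ((1 : G)))))]
    rw [hq2 (p * (q * ((1 : G))))]
    rw [hp2 (q * ((1 : G)))]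
    rw [hq2 ((1 : G))]

theorem Word_Epap {G : Type*} [Group G] (p q r : G)
    (hp2 : ∀ x : G, p * (p * x) = x) (hq2 : ∀ x : G, q * (q * x) = x)
    (hr2 : ∀ x : G, r * (r * x) = x)
    (hbpq : ∀ x : G, p * (q * (p * x)) = q * (p * (q * x)))
    (hbpr : ∀ x : G, p * (r * x) = r * (p * x))
    (hbqr : ∀ x : G, q * (r * (q * (r * (q * (r * x))))) = r * (q * (r * (q * (r * (q * x)))))) :
    p * (p * (q * (r * (q * (r * (q * (p * ((1 : G))))))))) = q * (r * (q * (r * (q * (p * ((1 : G))))))) := by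
  conv_lhs =>
    rw [hp2 (q * (r * (q * (r * (q * (p * ((1 : G))))))))]

theorem Word_Eqaq {G : Type*} [Group G] (p q r : G)
    (hp2 : ∀ x : G, p * (p * x) = x) (hq2 : ∀ x : G, q * (q * x) = x)
    (hr2 : ∀ x : G, r * (r * x) = x)
    (hbpq : ∀ x : G, p * (q * (p * x)) = q * (p * (q * x)))
    (hbpr : ∀ x : G, p * (r * x) = r * (p * x))
    (hbqr : ∀ x : G, q * (r * (q * (r * (q * (r * x))))) = r * (q * (r * (q * (r * (q * x)))))) :
    q * (p * (q * (r * (q * (r * (q * (q * ((1 : G))))))))) = q * (p * (q * (r * (q * (r * ((1 : G))))))) := by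
  conv_lhs =>
    rw [hq2 ((1 : G))]

theorem Word_Eqbq {G : Type*} [Group G] (p q r : G)
    (hp2 : ∀ x : G, p * (p * x) = x) (hq2 : ∀ x : G, q * (q * x) = x)
    (hr2 : ∀ x : G, r * (r * x) = x)
    (hbpq : ∀ x : G, p * (q * (p * x)) = q * (p * (q * x)))
    (hbpr : ∀ x : G, p * (r * x) = r * (p * x))
    (hbqr : ∀ x : G, q * (r * (q * (r * (q * (r * x))))) = r * (q * (r * (q * (r * (q * x)))))) :
    q * (q * (p * (q * (r * (q * (r * (q * ((1 : G))))))))) = p * (q * (r * (q * (r * (q * ((1 : G))))))) := by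
  conv_lhs =>
    rw [hq2 (p * (q * (r * (q * (r * (q * ((1 : G))))))))]

theorem Word_Erar {G : Type*} [Group G] (p q r : G)
    (hp2 : ∀ x : G, p * (p * x) = x) (hq2 : ∀ x : G, q * (q * x) = x)
    (hr2 : ∀ x : G, r * (r * x) = x)
    (hbpq : ∀ x : G, p * (q * (p * x)) = q * (p * (q * x)))
    (hbpr : ∀ x : G, p * (r * x) = r * (p * x))
    (hbqr : ∀ x : G, q * (r * (q * (r * (q * (r * x))))) = r * (q * (r * (q * (r * (q * x)))))) :
    r * (p * (q * (r * (q * (r * (q * (r * ((1 : G))))))))) = p * (q * (r * (q * (r * (q * ((1 : G))))))) := by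
  conv_lhs =>
    rw [← hbpr (q * (r * (q * (r * (q * (r * ((1 : G))))))))]
    rw [hbqr ((1 : G))]
    rw [hr2 (q * (r * (q * (r * (q * ((1 : G)))))))]

theorem Word_Eg {G : Type*} [Group G] (p q r : G)
    (hp2 : ∀ x : G, p * (p * x) = x) (hq2 : ∀ x : G, q * (q * x) = x)
    (hr2 : ∀ x : G, r * (r * x) = x)
    (hbpq : ∀ x : G, p * (q * (p * x)) = q * (p * (q * x)))
    (hbpr : ∀ x : G, p * (r * x) = r * (p * x))
    (hbqr : ∀ x : G, q * (r * (q * (r * (q * (r * x))))) = r * (q * (r * (q * (r * (q * x)))))) :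
    p * (q * (r * (q * (r * (p * (q * (r * (q * (r * ((1 : G))))))))))) = p * (q * (r * (q * (r * (q * (q * (p * (q * (r * (q * (r * ((1 : G))))))))))))) := by
  conv_lhs =>
    rw [← hq2 (p * (q * (r * (q * (r * ((1 : G)))))))]

theorem Word_Eh {G : Type*} [Group G] (p q r : G)
    (hp2 : ∀ x : G, p * (p * x) = x) (hq2 : ∀ x : G, q * (q * x) = x)
    (hr2 : ∀ x : G, r * (r * x) = x)
    (hbpq : ∀ x : G, p * (q * (p * x)) = q * (p * (q * x)))
    (hbpr : ∀ x : G, p * (r * x) = r * (p * x))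
    (hbqr : ∀ x : G, q * (r * (q * (r * (q * (r * x))))) = r * (q * (r * (q * (r * (q * x)))))) :
    p * (p * (q * (r * (q * (r * (p * (q * (r * (q * (r * (p * ((1 : G))))))))))))) = q * (r * (q * (r * (q * (p * (q * (r * (q * (r * (q * (p * (q * (p * (q * (r * (q * (r * ((1 : G))))))))))))))))))) := by
  conv_lhs =>
    rw [hp2 (q * (r * (q * (r * (p * (q * (r * (q * (r * (p * ((1 : G))))))))))))]
    rw [← hq2 (p * (q * (r * (q * (r * (p * ((1 : G))))))))]
    rw [← hbpr ((1 : G))]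
    rw [← hbpq (r * (q * (p * (r * ((1 : G))))))]
    rw [hbpr (q * (p * (r * ((1 : G)))))]
    rw [hbpq (r * ((1 : G)))]
    rw [← hr2 (p * (q * (r * ((1 : G)))))]
    rw [← hbpr (q * (r * ((1 : G))))]
    rw [← hq2 (r * (q * (r * ((1 : G)))))]
    rw [← hq2 (p * (q * (q * (r * (q * (r * ((1 : G))))))))]
    rw [← hbpq (q * (r * (q * (r * ((1 : G))))))]

theorem Word_Ep {G : Type*} [Group G] (p q r : G)
    (hp2 : ∀ x : G, p * (p * x) = x) (hq2 : ∀ x : G, q * (q * x) = x)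
    (hr2 : ∀ x : G, r * (r * x) = x)
    (hbpq : ∀ x : G, p * (q * (p * x)) = q * (p * (q * x)))
    (hbpr : ∀ x : G, p * (r * x) = r * (p * x))
    (hbqr : ∀ x : G, q * (r * (q * (r * (q * (r * x))))) = r * (q * (r * (q * (r * (q * x)))))) :
    p * (q * (r * (q * (r * (q * (q * (r * (q * (r * (q * ((1 : G)))))))))))) = p * ((1 : G)) := by
  conv_lhs =>
    rw [hq2 (r * (q * (r * (q * ((1 : G))))))]
    rw [hr2 (q * (r * (q * ((1 : G)))))]
    rw [hq2 (r * (q * ((1 : G))))]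
    rw [hr2 (q * ((1 : G)))]
    rw [hq2 ((1 : G))]

theorem Word_Er {G : Type*} [Group G] (p q r : G)
    (hp2 : ∀ x : G, p * (p * x) = x) (hq2 : ∀ x : G, q * (q * x) = x)
    (hr2 : ∀ x : G, r * (r * x) = x)
    (hbpq : ∀ x : G, p * (q * (p * x)) = q * (p * (q * x)))
    (hbpr : ∀ x : G, p * (r * x) = r * (p * x))
    (hbqr : ∀ x : G, q * (r * (q * (r * (q * (r * x))))) = r * (q * (r * (q * (r * (q * x)))))) :
    q * (r * (q * (r * (q * (r * (q * (r * (q * (r * (q * ((1 : G)))))))))))) = r * ((1 : G)) := by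
  conv_lhs =>
    rw [hbqr (q * ((1 : G)))]
    rw [hr2 (q * (r * (q * (r * (q * (q * ((1 : G))))))))]
    rw [hq2 ((1 : G))]
    rw [hq2 (r * (q * (r * ((1 : G)))))]
    rw [hr2 (q * (r * ((1 : G))))]
    rw [hq2 (r * ((1 : G)))]

theorem Word_Em {G : Type*} [Group G] (p q r : G)
    (hp2 : ∀ x : G, p * (p * x) = x) (hq2 : ∀ x : G, q * (q * x) = x)
    (hr2 : ∀ x : G, r * (r * x) = x)
    (hbpq : ∀ x : G, p * (q * (p * x)) = q * (p * (q * x)))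
    (hbpr : ∀ x : G, p * (r * x) = r * (p * x))
    (hbqr : ∀ x : G, q * (r * (q * (r * (q * (r * x))))) = r * (q * (r * (q * (r * (q * x)))))) :
    p * (q * (r * (q * (r * (r * (q * (r * (q * (p * ((1 : G))))))))))) = (1 : G) := by
  conv_lhs =>
    rw [hr2 (q * (r * (q * (p * ((1 : G))))))]
    rw [hq2 (r * (q * (p * ((1 : G)))))]
    rw [hr2 (q * (p * ((1 : G))))]
    rw [hq2 (p * ((1 : G)))]
    rw [hp2 ((1 : G))]

-- Auxiliary: a bound on the cardinality of a group generated by two involutions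
-- whose product has order dividing 6 (a quotient of the dihedral group D₆).
theorem dihedralBound {Q : Type*} [Group Q] (x y : Q) (hx : x * x = 1) (hy : y * y = 1)
    (hxy : (x * y) ^ 6 = 1) (hgen : Subgroup.closure {x, y} = ⊤) : Nat.card Q ≤ 12 := by
  have hxi : x⁻¹ = x := inv_eq_of_mul_eq_one_right hx
  have hyi : y⁻¹ = y := inv_eq_of_mul_eq_one_right hy
  have hinv5 : ∀ l : ℕ, ((x * y) ^ l)⁻¹ = (x * y) ^ (5 * l) := by
    intro l
    have h1 : (x * y) ^ (5 * l) * (x * y) ^ l = 1 := by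
      rw [← pow_add, show 5 * l + l = 6 * l by ring, pow_mul, hxy, one_pow]
    exact inv_eq_of_mul_eq_one_left h1
  have hconj : x * (x * y) * x⁻¹ = (x * y)⁻¹ := by
    rw [hxi, mul_inv_rev, hxi, hyi]
    calc x * (x * y) * x = x * x * (y * x) := by simp only [mul_assoc]
      _ = y * x := by rw [hx, one_mul]
  have hxc : ∀ l : ℕ, x * (x * y) ^ l = (x * y) ^ (5 * l) * x := by
    intro l
    calc x * (x * y) ^ l = (x * (x * y) ^ l * x⁻¹) * x := by
          simp only [inv_mul_cancel_right]
      _ = (x * (x * y) * x⁻¹) ^ l * x := by rw [conj_pow]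
      _ = ((x * y)⁻¹) ^ l * x := by rw [hconj]
      _ = ((x * y) ^ l)⁻¹ * x := by rw [inv_pow]
      _ = (x * y) ^ (5 * l) * x := by rw [hinv5]
  have main : ∀ z : Q, ∃ k : ℕ, z = (x * y) ^ k ∨ z = (x * y) ^ k * x := by
    intro z
    have hz : z ∈ Subgroup.closure ({x, y} : Set Q) := by rw [hgen]; trivial
    induction hz using Subgroup.closure_induction with
    | mem w hw =>
      have hw' : w = x ∨ w = y := by simpa using hw
      rcases hw' with h1 | h1
      · exact ⟨0, Or.inr (by rw [h1, pow_zero, one_mul])⟩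
      · refine ⟨5, Or.inr ?_⟩
        have h51 := hinv5 1
        rw [pow_one, Nat.mul_one] at h51
        rw [h1, ← h51, mul_inv_rev, hxi, hyi, mul_assoc, hx, mul_one]
    | one => exact ⟨0, Or.inl (pow_zero _).symm⟩
    | mul u v hu hv ihu ihv =>
      obtain ⟨k, hk⟩ := ihu; obtain ⟨l, hl⟩ := ihv
      rcases hk with rfl | rfl <;> rcases hl with rfl | rfl
      · exact ⟨k + l, Or.inl (pow_add _ _ _).symm⟩
      · exact ⟨k + l, Or.inr (by rw [pow_add]; simp only [mul_assoc])⟩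
      · refine ⟨k + 5 * l, Or.inr ?_⟩
        calc (x * y) ^ k * x * ((x * y) ^ l) = (x * y) ^ k * (x * (x * y) ^ l) := by
              simp only [mul_assoc]
          _ = (x * y) ^ k * ((x * y) ^ (5 * l) * x) := by rw [hxc]
          _ = (x * y) ^ (k + 5 * l) * x := by rw [pow_add]; simp only [mul_assoc]
      · refine ⟨k + 5 * l, Or.inl ?_⟩
        calc (x * y) ^ k * x * ((x * y) ^ l * x)
            = (x * y) ^ k * (x * (x * y) ^ l) * x := by simp only [mul_assoc]
          _ = (x * y) ^ k * ((x * y) ^ (5 * l) * x) * x := by rw [hxc]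
          _ = (x * y) ^ (k + 5 * l) * (x * x) := by rw [pow_add]; simp only [mul_assoc]
          _ = (x * y) ^ (k + 5 * l) := by rw [hx, mul_one]
    | inv u hu ihu =>
      obtain ⟨k, hk | hk⟩ := ihu
      · exact ⟨5 * k, Or.inl (by rw [hk, hinv5])⟩
      · refine ⟨5 * (5 * k), Or.inr ?_⟩
        rw [hk, mul_inv_rev, hxi, hinv5, hxc]
  have hsur : Function.Surjective (fun kb : Fin 6 × Bool =>
      if kb.2 then (x * y) ^ (kb.1 : ℕ) * x else (x * y) ^ (kb.1 : ℕ)) := by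
    intro z
    obtain ⟨k, hk | hk⟩ := main z
    · refine ⟨(⟨k % 6, Nat.mod_lt _ (by norm_num)⟩, false), ?_⟩
      simp only [Bool.false_eq_true, if_false]
      rw [hk]
      exact (pow_eq_pow_mod k hxy).symm
    · refine ⟨(⟨k % 6, Nat.mod_lt _ (by norm_num)⟩, true), ?_⟩
      simp only [if_true]
      rw [hk]
      rw [← pow_eq_pow_mod k hxy]
  have hcard := Nat.card_le_card_of_surjective _ hsur
  calc Nat.card Q ≤ Nat.card (Fin 6 × Bool) := hcard
    _ = 12 := by simp [Nat.card_prod]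

theorem stmt3 (s : ℕ) (hs : 1 ≤ s)
    (G : Type*) [Group G] [Finite G] (ρ0 ρ1 ρ2 : G)
    (hgen : Subgroup.closure {ρ0, ρ1, ρ2} = ⊤)
    (hr0 : ρ0 ^ 2 = 1) (hr1 : ρ1 ^ 2 = 1) (hr2 : ρ2 ^ 2 = 1)
    (h01 : (ρ0 * ρ1) ^ 3 = 1) (h12 : (ρ1 * ρ2) ^ 6 = 1) (h02 : (ρ0 * ρ2) ^ 2 = 1)
    (hmap : ((ρ2 * ρ1) ^ 2 * ρ0) ^ (2 * s) = 1)
    (hG : Nat.card G = 36 * s ^ 2)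
    (g h : G) (hgdef : g = (ρ0 * (ρ1 * ρ2) ^ 2) ^ 2) (hhdef : h = ρ0 * g * ρ0)
    (T : Subgroup G) (hT : T = Subgroup.closure {g, h})
    (X : Type*) [Finite X] [MulAction G X]
    (hfaith : ∀ a : G, (∀ x : X, a • x = x) → a = 1)
    (htrans : ∀ x y : X, ∃ a : G, a • x = y)
    : ¬ (∀ x y : X, ∃ t ∈ T, t • x = y) := by
  intro Htrans
  -- X is nonempty, else G would be trivial
  rcases isEmpty_or_nonempty X with hE | hne
  · have hall : ∀ u : G, u = 1 := fun u => hfaith u (fun x => (hE.false x).elim)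
    have hsub : Subsingleton G := ⟨fun u v => by rw [hall u, hall v]⟩
    have hle : Nat.card G = 1 := @Nat.card_unique G ⟨1⟩ hsub
    rw [hG] at hle
    have h1s : 1 ≤ s ^ 2 := Nat.one_le_pow _ _ hs
    nlinarith
  obtain ⟨x₀⟩ := hne
  -- Basic consequences of the relations
  have hpp : ρ0 * ρ0 = 1 := by rw [← pow_two]; exact hr0
  have hqq : ρ1 * ρ1 = 1 := by rw [← pow_two]; exact hr1
  have hrr : ρ2 * ρ2 = 1 := by rw [← pow_two]; exact hr2
  have i0 : ρ0⁻¹ = ρ0 := inv_eq_of_mul_eq_one_right hpp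
  have i1 : ρ1⁻¹ = ρ1 := inv_eq_of_mul_eq_one_right hqq
  have i2 : ρ2⁻¹ = ρ2 := inv_eq_of_mul_eq_one_right hrr
  have hp2 : ∀ x : G, ρ0 * (ρ0 * x) = x := fun x => by rw [← mul_assoc, hpp, one_mul]
  have hq2 : ∀ x : G, ρ1 * (ρ1 * x) = x := fun x => by rw [← mul_assoc, hqq, one_mul]
  have hr2' : ∀ x : G, ρ2 * (ρ2 * x) = x := fun x => by rw [← mul_assoc, hrr, one_mul]
  have hbraid01 : ρ0 * ρ1 * ρ0 = ρ1 * ρ0 * ρ1 := by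
    have e : (ρ0 * ρ1 * ρ0) * (ρ1 * ρ0 * ρ1) = 1 := by
      calc (ρ0 * ρ1 * ρ0) * (ρ1 * ρ0 * ρ1) = (ρ0 * ρ1) ^ 3 := by rw [pow_three]; simp only [mul_assoc]
        _ = 1 := h01
    have e2 := mul_eq_one_iff_eq_inv.mp e
    simpa [mul_inv_rev, i0, i1, mul_assoc] using e2
  have hbpq : ∀ x : G, ρ0 * (ρ1 * (ρ0 * x)) = ρ1 * (ρ0 * (ρ1 * x)) := fun x => by
    calc ρ0 * (ρ1 * (ρ0 * x)) = (ρ0 * ρ1 * ρ0) * x := by simp only [mul_assoc]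
      _ = (ρ1 * ρ0 * ρ1) * x := by rw [hbraid01]
      _ = ρ1 * (ρ0 * (ρ1 * x)) := by simp only [mul_assoc]
  have hcomm02 : ρ0 * ρ2 = ρ2 * ρ0 := by
    have e : (ρ0 * ρ2) * (ρ0 * ρ2) = 1 := by rw [← pow_two]; exact h02
    have e2 := mul_eq_one_iff_eq_inv.mp e
    simpa [mul_inv_rev, i0, i2] using e2
  have hbpr : ∀ x : G, ρ0 * (ρ2 * x) = ρ2 * (ρ0 * x) := fun x => by
    rw [← mul_assoc, hcomm02, mul_assoc]
  have hz3 : (ρ1 * ρ2) ^ 3 = (ρ2 * ρ1) ^ 3 := by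
    have h1 : (ρ1 * ρ2) ^ 3 * (ρ1 * ρ2) ^ 3 = 1 := by
      rw [← pow_add, show (3 + 3 : ℕ) = 6 by norm_num]; exact h12
    have h2 : ((ρ1 * ρ2) ^ 3)⁻¹ = (ρ2 * ρ1) ^ 3 := by
      rw [← inv_pow, mul_inv_rev, i1, i2]
    rw [← h2]; exact eq_inv_of_mul_eq_one_left h1
  have hbqr : ∀ x : G, ρ1 * (ρ2 * (ρ1 * (ρ2 * (ρ1 * (ρ2 * x))))) =
      ρ2 * (ρ1 * (ρ2 * (ρ1 * (ρ2 * (ρ1 * x))))) := fun x => by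
    calc ρ1 * (ρ2 * (ρ1 * (ρ2 * (ρ1 * (ρ2 * x))))) = (ρ1 * ρ2) ^ 3 * x := by rw [pow_three]; simp only [mul_assoc]
      _ = (ρ2 * ρ1) ^ 3 * x := by rw [hz3]
      _ = ρ2 * (ρ1 * (ρ2 * (ρ1 * (ρ2 * (ρ1 * x))))) := by rw [pow_three]; simp only [mul_assoc]
  -- Instantiated word identities
  have W_E6 := Word_E6 ρ0 ρ1 ρ2 hp2 hq2 hr2' hbpq hbpr hbqr
  have W_E7 := Word_E7 ρ0 ρ1 ρ2 hp2 hq2 hr2' hbpq hbpr hbqr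
  have W_Epb := Word_Epb ρ0 ρ1 ρ2 hp2 hq2 hr2' hbpq hbpr hbqr
  have W_Einva := Word_Einva ρ0 ρ1 ρ2 hp2 hq2 hr2' hbpq hbpr hbqr
  have W_Einvb := Word_Einvb ρ0 ρ1 ρ2 hp2 hq2 hr2' hbpq hbpr hbqr
  have W_Epap := Word_Epap ρ0 ρ1 ρ2 hp2 hq2 hr2' hbpq hbpr hbqr
  have W_Eqaq := Word_Eqaq ρ0 ρ1 ρ2 hp2 hq2 hr2' hbpq hbpr hbqr
  have W_Eqbq := Word_Eqbq ρ0 ρ1 ρ2 hp2 hq2 hr2' hbpq hbpr hbqr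
  have W_Erar := Word_Erar ρ0 ρ1 ρ2 hp2 hq2 hr2' hbpq hbpr hbqr
  have W_Eg := Word_Eg ρ0 ρ1 ρ2 hp2 hq2 hr2' hbpq hbpr hbqr
  have W_Eh := Word_Eh ρ0 ρ1 ρ2 hp2 hq2 hr2' hbpq hbpr hbqr
  have W_Ep := Word_Ep ρ0 ρ1 ρ2 hp2 hq2 hr2' hbpq hbpr hbqr
  have W_Em := Word_Em ρ0 ρ1 ρ2 hp2 hq2 hr2' hbpq hbpr hbqr

  -- a and b: the two unit translations
  obtain ⟨aa, ha⟩ : ∃ aa : G, aa = ρ0 * (ρ1 * (ρ2 * (ρ1 * (ρ2 * ρ1)))) := ⟨_, rfl⟩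
  obtain ⟨bb, hb⟩ : ∃ bb : G, bb = ρ1 * (ρ0 * (ρ1 * (ρ2 * (ρ1 * ρ2)))) := ⟨_, rfl⟩
  have hainv1 : aa * (ρ1 * (ρ2 * (ρ1 * (ρ2 * (ρ1 * ρ0))))) = 1 := by
    rw [ha]
    calc (ρ0 * (ρ1 * (ρ2 * (ρ1 * (ρ2 * ρ1))))) * (ρ1 * (ρ2 * (ρ1 * (ρ2 * (ρ1 * ρ0))))) = ρ0 * (ρ1 * (ρ2 * (ρ1 * (ρ2 * (ρ1 * (ρ1 * (ρ2 * (ρ1 * (ρ2 * (ρ1 * (ρ0 * ((1 : G))))))))))))) := by simp only [pow_two, mul_assoc, mul_one]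
      _ = (1 : G) := W_Einva
  have hainv : aa⁻¹ = ρ1 * (ρ2 * (ρ1 * (ρ2 * (ρ1 * ρ0)))) := inv_eq_of_mul_eq_one_right hainv1
  have hbinv1 : bb * (ρ2 * (ρ1 * (ρ2 * (ρ1 * (ρ0 * ρ1))))) = 1 := by
    rw [hb]
    calc (ρ1 * (ρ0 * (ρ1 * (ρ2 * (ρ1 * ρ2))))) * (ρ2 * (ρ1 * (ρ2 * (ρ1 * (ρ0 * ρ1))))) = ρ1 * (ρ0 * (ρ1 * (ρ2 * (ρ1 * (ρ2 * (ρ2 * (ρ1 * (ρ2 * (ρ1 * (ρ0 * (ρ1 * ((1 : G))))))))))))) := by simp only [pow_two, mul_assoc, mul_one]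
      _ = (1 : G) := W_Einvb
  have hbinv : bb⁻¹ = ρ2 * (ρ1 * (ρ2 * (ρ1 * (ρ0 * ρ1)))) := inv_eq_of_mul_eq_one_right hbinv1
  have hqaq : ρ1 * aa * ρ1 = bb := by
    rw [ha, hb]
    calc ρ1 * (ρ0 * (ρ1 * (ρ2 * (ρ1 * (ρ2 * ρ1))))) * ρ1 = ρ1 * (ρ0 * (ρ1 * (ρ2 * (ρ1 * (ρ2 * (ρ1 * (ρ1 * ((1 : G))))))))) := by simp only [pow_two, mul_assoc, mul_one]
      _ = ρ1 * (ρ0 * (ρ1 * (ρ2 * (ρ1 * (ρ2 * ((1 : G))))))) := W_Eqaq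
      _ = ρ1 * (ρ0 * (ρ1 * (ρ2 * (ρ1 * ρ2)))) := by simp only [pow_two, mul_assoc, mul_one]
  have hqbq : ρ1 * bb * ρ1 = aa := by
    rw [ha, hb]
    calc ρ1 * (ρ1 * (ρ0 * (ρ1 * (ρ2 * (ρ1 * ρ2))))) * ρ1 = ρ1 * (ρ1 * (ρ0 * (ρ1 * (ρ2 * (ρ1 * (ρ2 * (ρ1 * ((1 : G))))))))) := by simp only [pow_two, mul_assoc, mul_one]
      _ = ρ0 * (ρ1 * (ρ2 * (ρ1 * (ρ2 * (ρ1 * ((1 : G))))))) := W_Eqbq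
      _ = ρ0 * (ρ1 * (ρ2 * (ρ1 * (ρ2 * ρ1)))) := by simp only [pow_two, mul_assoc, mul_one]
  have hrar : ρ2 * aa * ρ2 = aa := by
    rw [ha]
    calc ρ2 * (ρ0 * (ρ1 * (ρ2 * (ρ1 * (ρ2 * ρ1))))) * ρ2 = ρ2 * (ρ0 * (ρ1 * (ρ2 * (ρ1 * (ρ2 * (ρ1 * (ρ2 * ((1 : G))))))))) := by simp only [pow_two, mul_assoc, mul_one]
      _ = ρ0 * (ρ1 * (ρ2 * (ρ1 * (ρ2 * (ρ1 * ((1 : G))))))) := W_Erar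
      _ = ρ0 * (ρ1 * (ρ2 * (ρ1 * (ρ2 * ρ1)))) := by simp only [pow_two, mul_assoc, mul_one]
  have hrbr : ρ2 * bb * ρ2 = aa * bb⁻¹ := by
    rw [hbinv, hb, ha]
    calc ρ2 * (ρ1 * (ρ0 * (ρ1 * (ρ2 * (ρ1 * ρ2))))) * ρ2 = ρ2 * (ρ1 * (ρ0 * (ρ1 * (ρ2 * (ρ1 * (ρ2 * (ρ2 * ((1 : G))))))))) := by simp only [pow_two, mul_assoc, mul_one]
      _ = ρ0 * (ρ1 * (ρ2 * (ρ1 * (ρ2 * (ρ1 * (ρ2 * (ρ1 * (ρ2 * (ρ1 * (ρ0 * (ρ1 * ((1 : G))))))))))))) := W_E7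
      _ = (ρ0 * (ρ1 * (ρ2 * (ρ1 * (ρ2 * ρ1))))) * (ρ2 * (ρ1 * (ρ2 * (ρ1 * (ρ0 * ρ1))))) := by simp only [pow_two, mul_assoc, mul_one]
  have hpap : ρ0 * aa * ρ0 = aa⁻¹ := by
    rw [hainv, ha]
    calc ρ0 * (ρ0 * (ρ1 * (ρ2 * (ρ1 * (ρ2 * ρ1))))) * ρ0 = ρ0 * (ρ0 * (ρ1 * (ρ2 * (ρ1 * (ρ2 * (ρ1 * (ρ0 * ((1 : G))))))))) := by simp only [pow_two, mul_assoc, mul_one]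
      _ = ρ1 * (ρ2 * (ρ1 * (ρ2 * (ρ1 * (ρ0 * ((1 : G))))))) := W_Epap
      _ = ρ1 * (ρ2 * (ρ1 * (ρ2 * (ρ1 * ρ0)))) := by simp only [pow_two, mul_assoc, mul_one]
  have hpbp : ρ0 * bb * ρ0 = aa⁻¹ * bb := by
    rw [hainv, hb]
    calc ρ0 * (ρ1 * (ρ0 * (ρ1 * (ρ2 * (ρ1 * ρ2))))) * ρ0 = ρ0 * (ρ1 * (ρ0 * (ρ1 * (ρ2 * (ρ1 * (ρ2 * (ρ0 * ((1 : G))))))))) := by simp only [pow_two, mul_assoc, mul_one]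
      _ = ρ1 * (ρ2 * (ρ1 * (ρ2 * (ρ1 * (ρ0 * (ρ1 * (ρ0 * (ρ1 * (ρ2 * (ρ1 * (ρ2 * ((1 : G))))))))))))) := W_Epb
      _ = (ρ1 * (ρ2 * (ρ1 * (ρ2 * (ρ1 * ρ0))))) * (ρ1 * (ρ0 * (ρ1 * (ρ2 * (ρ1 * ρ2))))) := by simp only [pow_two, mul_assoc, mul_one]
  have hab : aa * bb = bb * aa := by
    rw [ha, hb]
    calc (ρ0 * (ρ1 * (ρ2 * (ρ1 * (ρ2 * ρ1))))) * (ρ1 * (ρ0 * (ρ1 * (ρ2 * (ρ1 * ρ2))))) = ρ0 * (ρ1 * (ρ2 * (ρ1 * (ρ2 * (ρ1 * (ρ1 * (ρ0 * (ρ1 * (ρ2 * (ρ1 * (ρ2 * ((1 : G))))))))))))) := by simp only [pow_two, mul_assoc, mul_one]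
      _ = ρ1 * (ρ0 * (ρ1 * (ρ2 * (ρ1 * (ρ2 * (ρ0 * (ρ1 * (ρ2 * (ρ1 * (ρ2 * (ρ1 * ((1 : G))))))))))))) := W_E6
      _ = (ρ1 * (ρ0 * (ρ1 * (ρ2 * (ρ1 * ρ2))))) * (ρ0 * (ρ1 * (ρ2 * (ρ1 * (ρ2 * ρ1))))) := by simp only [pow_two, mul_assoc, mul_one]
  have hg_ab : g = aa * bb := by
    rw [hgdef, ha, hb]
    calc (ρ0 * (ρ1 * ρ2) ^ 2) ^ 2 = ρ0 * (ρ1 * (ρ2 * (ρ1 * (ρ2 * (ρ0 * (ρ1 * (ρ2 * (ρ1 * (ρ2 * ((1 : G))))))))))) := by simp only [pow_two, mul_assoc, mul_one]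
      _ = ρ0 * (ρ1 * (ρ2 * (ρ1 * (ρ2 * (ρ1 * (ρ1 * (ρ0 * (ρ1 * (ρ2 * (ρ1 * (ρ2 * ((1 : G))))))))))))) := W_Eg
      _ = (ρ0 * (ρ1 * (ρ2 * (ρ1 * (ρ2 * ρ1))))) * (ρ1 * (ρ0 * (ρ1 * (ρ2 * (ρ1 * ρ2))))) := by simp only [pow_two, mul_assoc, mul_one]
  have hh_ab : h = aa⁻¹ * (aa⁻¹ * bb) := by
    rw [hhdef, hgdef, hainv, hb]
    calc ρ0 * (ρ0 * (ρ1 * ρ2) ^ 2) ^ 2 * ρ0 = ρ0 * (ρ0 * (ρ1 * (ρ2 * (ρ1 * (ρ2 * (ρ0 * (ρ1 * (ρ2 * (ρ1 * (ρ2 * (ρ0 * ((1 : G))))))))))))) := by simp only [pow_two, mul_assoc, mul_one]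
      _ = ρ1 * (ρ2 * (ρ1 * (ρ2 * (ρ1 * (ρ0 * (ρ1 * (ρ2 * (ρ1 * (ρ2 * (ρ1 * (ρ0 * (ρ1 * (ρ0 * (ρ1 * (ρ2 * (ρ1 * (ρ2 * ((1 : G))))))))))))))))))) := W_Eh
      _ = (ρ1 * (ρ2 * (ρ1 * (ρ2 * (ρ1 * ρ0))))) * ((ρ1 * (ρ2 * (ρ1 * (ρ2 * (ρ1 * ρ0))))) * (ρ1 * (ρ0 * (ρ1 * (ρ2 * (ρ1 * ρ2)))))) := by simp only [pow_two, mul_assoc, mul_one]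
  have hper : aa * ((ρ1 * ρ2) ^ 2 * ρ1) = ρ0 := by
    rw [ha]
    calc (ρ0 * (ρ1 * (ρ2 * (ρ1 * (ρ2 * ρ1))))) * ((ρ1 * ρ2) ^ 2 * ρ1) = ρ0 * (ρ1 * (ρ2 * (ρ1 * (ρ2 * (ρ1 * (ρ1 * (ρ2 * (ρ1 * (ρ2 * (ρ1 * ((1 : G)))))))))))) := by simp only [pow_two, mul_assoc, mul_one]
      _ = ρ0 * ((1 : G)) := W_Ep
      _ = ρ0 := by simp only [pow_two, mul_assoc, mul_one]
  have hm1 : (ρ0 * (ρ1 * ρ2) ^ 2) * ((ρ2 * ρ1) ^ 2 * ρ0) = 1 := by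
    calc (ρ0 * (ρ1 * ρ2) ^ 2) * ((ρ2 * ρ1) ^ 2 * ρ0) = ρ0 * (ρ1 * (ρ2 * (ρ1 * (ρ2 * (ρ2 * (ρ1 * (ρ2 * (ρ1 * (ρ0 * ((1 : G))))))))))) := by simp only [pow_two, mul_assoc, mul_one]
      _ = (1 : G) := W_Em
  -- orders of the generating translations g, h
  have hgs : g ^ s = 1 := by
    have hx2 : (ρ0 * (ρ1 * ρ2) ^ 2)⁻¹ = (ρ2 * ρ1) ^ 2 * ρ0 := inv_eq_of_mul_eq_one_right hm1
    rw [hgdef, ← pow_mul, ← inv_inv (ρ0 * (ρ1 * ρ2) ^ 2), hx2, inv_pow, hmap, inv_one]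
  have hhs : h ^ s = 1 := by
    have e : ρ0 * g * ρ0 = ρ0 * g * ρ0⁻¹ := by rw [i0]
    rw [hhdef, e, conj_pow, hgs, mul_one, mul_inv_cancel]
  -- The subgroup T' generated by the two unit translations
  obtain ⟨T', hT'⟩ : ∃ T' : Subgroup G, T' = Subgroup.closure {aa, bb} := ⟨_, rfl⟩
  have haT' : aa ∈ T' := by rw [hT']; exact Subgroup.subset_closure (by simp)
  have hbT' : bb ∈ T' := by rw [hT']; exact Subgroup.subset_closure (by simp)
  -- T' is commutative
  have hsubC : ∀ w : G, w * aa = aa * w → w * bb = bb * w →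
      T' ≤ Subgroup.centralizer {w} := by
    intro w hwa hwb
    rw [hT']
    apply (Subgroup.closure_le _).mpr
    rintro v (rfl | rfl)
    · exact Subgroup.mem_centralizer_iff.mpr (by
        intro h' hh'
        rw [Set.mem_singleton_iff] at hh'
        rw [hh']; exact hwa)
    · exact Subgroup.mem_centralizer_iff.mpr (by
        intro h' hh'
        rw [Set.mem_singleton_iff] at hh'
        rw [hh']; exact hwb)
  have hcen : ∀ u ∈ T', ∀ v ∈ T', u * v = v * u := by
    intro u hu v hv
    have h1 : T' ≤ Subgroup.centralizer {aa} := hsubC aa rfl hab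
    have h2 : T' ≤ Subgroup.centralizer {bb} := hsubC bb hab.symm rfl
    have hua : aa * u = u * aa := Subgroup.mem_centralizer_iff.mp (h1 hu) aa (by simp)
    have hub : bb * u = u * bb := Subgroup.mem_centralizer_iff.mp (h2 hu) bb (by simp)
    have h3 : T' ≤ Subgroup.centralizer {u} := hsubC u hua.symm hub.symm
    exact Subgroup.mem_centralizer_iff.mp (h3 hv) u (by simp)
  -- T ≤ T'
  have hTle : T ≤ T' := by
    rw [hT, hT']
    apply (Subgroup.closure_le _).mpr
    rintro v (rfl | rfl)
    · rw [hg_ab]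
      exact mul_mem (Subgroup.subset_closure (by simp)) (Subgroup.subset_closure (by simp))
    · rw [hh_ab]
      exact mul_mem (inv_mem (Subgroup.subset_closure (by simp)))
        (mul_mem (inv_mem (Subgroup.subset_closure (by simp)))
          (Subgroup.subset_closure (by simp)))
  -- conjugation by each generator preserves T'
  have hconjgen : ∀ ρ : G, ρ * ρ = 1 → (ρ * aa * ρ ∈ T') → (ρ * bb * ρ ∈ T') →
      ∀ x ∈ T', ρ * x * ρ ∈ T' := by
    intro ρ hρρ hca hcb x hx
    have hρi : ρ⁻¹ = ρ := inv_eq_of_mul_eq_one_right hρρ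
    rw [hT'] at hx ⊢
    rw [hT'] at hca hcb
    induction hx using Subgroup.closure_induction with
    | mem w hw =>
      rcases hw with rfl | rfl
      · exact hca
      · exact hcb
    | one =>
      rw [mul_one, hρρ]; exact one_mem _
    | mul u v hu hv ihu ihv =>
      have e : ρ * (u * v) * ρ = (ρ * u * ρ) * (ρ * v * ρ) := by
        symm
        calc (ρ * u * ρ) * (ρ * v * ρ) = ρ * u * ((ρ * ρ) * (v * ρ)) := by
              simp only [mul_assoc]
          _ = ρ * u * (1 * (v * ρ)) := by rw [hρρ]
          _ = ρ * (u * v) * ρ := by simp only [one_mul, mul_assoc]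
      rw [e]; exact mul_mem ihu ihv
    | inv u hu ihu =>
      have e : ρ * u⁻¹ * ρ = (ρ * u * ρ)⁻¹ := by
        simp [mul_inv_rev, hρi, mul_assoc]
      rw [e]; exact inv_mem ihu
  -- T' is normal
  have hnorm : T'.Normal := by
    constructor
    intro n hn g'
    have htop : Subgroup.normalizer (T' : Set G) = ⊤ := by
      rw [eq_top_iff, ← hgen]
      apply (Subgroup.closure_le _).mpr
      intro ρ hρ
      have hcase : ρ = ρ0 ∨ ρ = ρ1 ∨ ρ = ρ2 := by simpa using hρ
      have hmain : ρ * ρ = 1 ∧ (∀ x ∈ T', ρ * x * ρ ∈ T') := by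
        rcases hcase with h | h | h
        · rw [h]
          refine ⟨hpp, hconjgen ρ0 hpp ?_ ?_⟩
          · rw [hpap]; exact inv_mem haT'
          · rw [hpbp]; exact mul_mem (inv_mem haT') hbT'
        · rw [h]
          refine ⟨hqq, hconjgen ρ1 hqq ?_ ?_⟩
          · rw [hqaq]; exact hbT'
          · rw [hqbq]; exact haT'
        · rw [h]
          refine ⟨hrr, hconjgen ρ2 hrr ?_ ?_⟩
          · rw [hrar]; exact haT'
          · rw [hrbr]; exact mul_mem haT' (inv_mem hbT')
      obtain ⟨hρρ, hc⟩ := hmain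
      have hρi : ρ⁻¹ = ρ := inv_eq_of_mul_eq_one_right hρρ
      show ρ ∈ Subgroup.normalizer (T' : Set G)
      rw [Subgroup.mem_normalizer_iff]
      intro hh
      constructor
      · intro hmem; rw [hρi]; exact hc _ hmem
      · intro hmem
        rw [hρi] at hmem
        have h2 := hc _ hmem
        have e : ρ * (ρ * hh * ρ) * ρ = hh := by
          calc ρ * (ρ * hh * ρ) * ρ = (ρ * ρ) * hh * (ρ * ρ) := by group
            _ = hh := by rw [hρρ, one_mul, mul_one]
        rwa [e] at h2
    have hg' : g' ∈ Subgroup.normalizer (T' : Set G) := by rw [htop]; trivial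
    exact (Subgroup.mem_normalizer_iff.mp hg' n).mp hn
  haveI := hnorm
  -- The quotient G / T' is a quotient of the dihedral group of order 12
  have hπa : (QuotientGroup.mk' T') aa = 1 := by
    rw [← MonoidHom.mem_ker, QuotientGroup.ker_mk']; exact haT'
  have hQx : (QuotientGroup.mk' T') ρ1 * (QuotientGroup.mk' T') ρ1 = 1 := by
    rw [← map_mul, hqq, map_one]
  have hQy : (QuotientGroup.mk' T') ρ2 * (QuotientGroup.mk' T') ρ2 = 1 := by
    rw [← map_mul, hrr, map_one]
  have hQxy : ((QuotientGroup.mk' T') ρ1 * (QuotientGroup.mk' T') ρ2) ^ 6 = 1 := by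
    rw [← map_mul, ← map_pow, h12, map_one]
  have hQgen : Subgroup.closure {(QuotientGroup.mk' T') ρ1, (QuotientGroup.mk' T') ρ2} = ⊤ := by
    have h1 : Subgroup.closure ((QuotientGroup.mk' T') '' {ρ0, ρ1, ρ2}) = ⊤ := by
      rw [← MonoidHom.map_closure, hgen,
        Subgroup.map_top_of_surjective _ (QuotientGroup.mk'_surjective T')]
    have h2 : (QuotientGroup.mk' T') ρ0 ∈
        Subgroup.closure {(QuotientGroup.mk' T') ρ1, (QuotientGroup.mk' T') ρ2} := by
      have e : (QuotientGroup.mk' T') ρ0 =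
          ((QuotientGroup.mk' T') ρ1 * (QuotientGroup.mk' T') ρ2) ^ 2 *
            (QuotientGroup.mk' T') ρ1 := by
        rw [← hper]
        simp [map_mul, map_pow, hπa]
      rw [e]
      exact mul_mem (pow_mem (mul_mem (Subgroup.subset_closure (by simp))
        (Subgroup.subset_closure (by simp))) 2) (Subgroup.subset_closure (by simp))
    rw [eq_top_iff, ← h1]
    apply (Subgroup.closure_le _).mpr
    intro w hw
    simp only [Set.image_insert_eq, Set.image_singleton] at hw
    rcases hw with rfl | rfl | rfl
    · exact h2
    · exact Subgroup.subset_closure (by simp)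
    · exact Subgroup.subset_closure (by simp)
  have hQcard : Nat.card (G ⧸ T') ≤ 12 := dihedralBound _ _ hQx hQy hQxy hQgen
  -- Cardinality bound for T
  have hgT : g ∈ T := by rw [hT]; exact Subgroup.subset_closure (by simp)
  have hhT : h ∈ T := by rw [hT]; exact Subgroup.subset_closure (by simp)
  have hCgh : Commute g h := hcen g (hTle hgT) h (hTle hhT)
  have hpi : ∀ w : G, w ^ s = 1 → ∀ m : ℕ, (w ^ m)⁻¹ = w ^ (m * (s - 1)) := by
    intro w hw m
    have e2 : s - 1 + 1 = s := Nat.sub_add_cancel hs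
    have e : m * (s - 1) + m = m * s := by
      calc m * (s - 1) + m = m * ((s - 1) + 1) := by ring
        _ = m * s := by rw [e2]
    have h1 : w ^ (m * (s - 1)) * w ^ m = 1 := by
      rw [← pow_add, e, mul_comm m s, pow_mul, hw, one_pow]
    exact inv_eq_of_mul_eq_one_left h1
  have hrepr : ∀ t ∈ T, ∃ i j : ℕ, i < s ∧ j < s ∧ t = g ^ i * h ^ j := by
    intro t ht
    rw [hT] at ht
    induction ht using Subgroup.closure_induction with
    | mem w hw =>
      rcases hw with rfl | rfl
      · exact ⟨1 % s, 0, Nat.mod_lt _ hs, hs, by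
          rw [pow_zero, mul_one, ← pow_eq_pow_mod 1 hgs, pow_one]⟩
      · exact ⟨0, 1 % s, hs, Nat.mod_lt _ hs, by
          rw [pow_zero, one_mul, ← pow_eq_pow_mod 1 hhs, pow_one]⟩
    | one => exact ⟨0, 0, hs, hs, by simp⟩
    | mul u v hu hv ihu ihv =>
      obtain ⟨i, j, _, _, rfl⟩ := ihu
      obtain ⟨k, l, _, _, rfl⟩ := ihv
      refine ⟨(i + k) % s, (j + l) % s, Nat.mod_lt _ hs, Nat.mod_lt _ hs, ?_⟩
      have hsw : h ^ j * g ^ k = g ^ k * h ^ j := (hCgh.symm.pow_pow j k).eq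
      calc g ^ i * h ^ j * (g ^ k * h ^ l) = g ^ i * (h ^ j * g ^ k) * h ^ l := by
            simp only [mul_assoc]
        _ = g ^ i * (g ^ k * h ^ j) * h ^ l := by rw [hsw]
        _ = g ^ (i + k) * h ^ (j + l) := by rw [pow_add, pow_add]; simp only [mul_assoc]
        _ = g ^ ((i + k) % s) * h ^ ((j + l) % s) := by
            rw [← pow_eq_pow_mod (i + k) hgs, ← pow_eq_pow_mod (j + l) hhs]
    | inv u hu ihu =>
      obtain ⟨i, j, _, _, rfl⟩ := ihu
      refine ⟨(i * (s - 1)) % s, (j * (s - 1)) % s, Nat.mod_lt _ hs, Nat.mod_lt _ hs, ?_⟩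
      have hsw : h ^ (j * (s - 1)) * g ^ (i * (s - 1)) =
          g ^ (i * (s - 1)) * h ^ (j * (s - 1)) := (hCgh.symm.pow_pow _ _).eq
      calc (g ^ i * h ^ j)⁻¹ = (h ^ j)⁻¹ * (g ^ i)⁻¹ := mul_inv_rev _ _
        _ = h ^ (j * (s - 1)) * g ^ (i * (s - 1)) := by rw [hpi h hhs j, hpi g hgs i]
        _ = g ^ (i * (s - 1)) * h ^ (j * (s - 1)) := hsw
        _ = g ^ ((i * (s - 1)) % s) * h ^ ((j * (s - 1)) % s) := by
            rw [← pow_eq_pow_mod _ hgs, ← pow_eq_pow_mod _ hhs]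
  have hTcard : Nat.card T ≤ s * s := by
    have hsurT : Function.Surjective (fun ij : Fin s × Fin s =>
        (⟨g ^ (ij.1 : ℕ) * h ^ (ij.2 : ℕ),
          mul_mem (pow_mem hgT _) (pow_mem hhT _)⟩ : T)) := by
      rintro ⟨t, ht⟩
      obtain ⟨i, j, hi, hj, rfl⟩ := hrepr t ht
      exact ⟨(⟨i, hi⟩, ⟨j, hj⟩), rfl⟩
    have hcard := Nat.card_le_card_of_surjective _ hsurT
    calc Nat.card T ≤ Nat.card (Fin s × Fin s) := hcard
      _ = s * s := by simp [Nat.card_prod]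
  -- If T acts transitively, every element commuting with T lies in T, so T' ≤ T
  have hT'leT : T' ≤ T := by
    intro u hu
    have hcall : ∀ t ∈ T, u * t = t * u := fun t ht => hcen u hu t (hTle ht)
    obtain ⟨t, htT, htx⟩ := Htrans x₀ (u • x₀)
    have hfix : ∀ x : X, (t⁻¹ * u) • x = x := by
      intro x
      obtain ⟨t', ht'T, ht'x⟩ := Htrans x₀ x
      have hx0 : (t⁻¹ * u) • x₀ = x₀ := by
        rw [mul_smul, ← htx, ← mul_smul, inv_mul_cancel, one_smul]
      have c1 : u * t' = t' * u := hcall t' ht'T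
      have c2 : Commute t t' := hcen t (hTle htT) t' (hTle ht'T)
      have c3 : t⁻¹ * t' = t' * t⁻¹ := c2.inv_left.eq
      have e1 : (t⁻¹ * u) * t' = t' * (t⁻¹ * u) := by
        calc (t⁻¹ * u) * t' = t⁻¹ * (t' * u) := by rw [mul_assoc, c1]
          _ = (t' * t⁻¹) * u := by rw [← mul_assoc, c3]
          _ = t' * (t⁻¹ * u) := by rw [mul_assoc]
      rw [← ht'x, ← mul_smul, e1, mul_smul, hx0]
    have hone : t⁻¹ * u = 1 := hfaith _ hfix
    have : t = u := inv_mul_eq_one.mp hone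
    exact this ▸ htT
  -- Final counting contradiction
  have hcount := Subgroup.card_eq_card_quotient_mul_card_subgroup T'
  have hT'card : Nat.card T' ≤ s * s :=
    le_trans (Subgroup.card_le_of_le hT'leT) hTcard
  have hfin : (36 * s ^ 2 : ℕ) ≤ 12 * (s * s) := by
    rw [← hG, hcount]
    exact Nat.mul_le_mul hQcard hT'card
  have h36 : 36 * (s * s) ≤ 12 * (s * s) := by
    rw [pow_two] at hfin; exact hfin
  have hpos : 0 < s * s := Nat.mul_pos hs hs
  have : (36 : ℕ) ≤ 12 := by
    have h' : (s * s) * 36 ≤ (s * s) * 12 := by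
      rw [mul_comm (s * s) 36, mul_comm (s * s) 12]; exact h36
    exact Nat.le_of_mul_le_mul_left h' hpos
  omega
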